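/- arXiv:1807.04074 — 3 statements merged into one kernel-verified Lean document; each statement's English description precedes it below -/
import Mathlib

section
/- Let 1 < γ ≤ 2, positive weights w₁,…,w_N, and reals c₁,…,c_N (with c_j = φᵢ - φ(x_j)). Define f(h) = (ρ̄/(γ-1)) · [Σ w_j ((γ-1)(h + c_j)/γ)^(γ/(γ-1))] / [Σ w_j ((γ-1)(h + c_j)/γ)^(1/(γ-1))] for h with h + c_j > 0 for all j. If for all such h the ratio max_j(h + c_j)/min_j(h + c_j) < √γ, then f is strictly increasing on its domain. -/
open Finset

/-- Key double-sum inequality. -/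
lemma stmt_7_key (γ : ℝ) (hγ1 : 1 < γ) (N : ℕ) (hne : (Finset.univ : Finset (Fin N)).Nonempty)
    (w t : Fin N → ℝ) (hw : ∀ j, 0 < w j) (ht : ∀ j, 0 < t j)
    (hr : ∀ j k, t j < γ * t k) (α : ℝ) (hα : 0 < α) :
    α * ((∑ j, w j * t j ^ (α + 1)) * (∑ k, w k * t k ^ (α - 1))) <
      (γ * α) * ((∑ j, w j * t j ^ α) * (∑ k, w k * t k ^ α)) := by
  rw [Finset.sum_mul_sum, Finset.sum_mul_sum, Finset.mul_sum, Finset.mul_sum]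
  refine Finset.sum_lt_sum_of_nonempty hne ?_
  intro j _
  rw [Finset.mul_sum, Finset.mul_sum]
  refine Finset.sum_lt_sum_of_nonempty hne ?_
  intro k _
  have h1 : t j ^ (α + 1) = t j ^ α * t j := by
    rw [Real.rpow_add (ht j), Real.rpow_one]
  have h2 : t k ^ (α - 1) = t k ^ α / t k := by
    rw [Real.rpow_sub (ht k), Real.rpow_one]
  have ha : (0:ℝ) < t j ^ α := Real.rpow_pos_of_pos (ht j) α
  have hb : (0:ℝ) < t k ^ α := Real.rpow_pos_of_pos (ht k) α
  have hP : (0:ℝ) < α * w j * w k * t j ^ α * t k ^ α := by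
    have := hw j; have := hw k; positivity
  calc α * (w j * t j ^ (α + 1) * (w k * t k ^ (α - 1)))
      = (α * w j * w k * t j ^ α * t k ^ α) * (t j / t k) := by
        rw [h1, h2]; ring
    _ < (α * w j * w k * t j ^ α * t k ^ α) * γ := by
        refine mul_lt_mul_of_pos_left ?_ hP
        rw [div_lt_iff₀ (ht k)]
        exact hr j k
    _ = γ * α * (w j * t j ^ α * (w k * t k ^ α)) := by ring

/-- If on its whole domain the ratio `max_j (h + c_j) / min_j (h + c_j)`
is less than `√γ`, then the cell-average matching function `f` is strictly
increasing on its domain, for `1 < γ ≤ 2`. -/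
theorem stmt_7 (γ : ℝ) (hγ1 : 1 < γ) (hγ2 : γ ≤ 2)
    (N : ℕ) (hN : 1 ≤ N) (w c : Fin N → ℝ)
    (hw : ∀ j, 0 < w j) (ρbar : ℝ) (hρbar : 0 < ρbar)
    (f : ℝ → ℝ)
    (hf : ∀ h, (∀ j, 0 < h + c j) →
      f h = (ρbar / (γ - 1)) *
        (∑ j, w j * ((γ - 1) * (h + c j) / γ) ^ (γ / (γ - 1))) /
        (∑ j, w j * ((γ - 1) * (h + c j) / γ) ^ (1 / (γ - 1))))
    (hratio : ∀ h, (∀ j, 0 < h + c j) →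
      ∀ j k, h + c j < Real.sqrt γ * (h + c k)) :
    StrictMonoOn f {h | ∀ j, 0 < h + c j} := by
  have hγ0 : (0:ℝ) < γ - 1 := by linarith
  have hγpos : (0:ℝ) < γ := by linarith
  have hne : (Finset.univ : Finset (Fin N)).Nonempty := ⟨⟨0, hN⟩, Finset.mem_univ _⟩
  set α : ℝ := 1 / (γ - 1) with hαdef
  set β : ℝ := γ / (γ - 1) with hβdef
  have hαpos : 0 < α := by positivity
  have hβα : β = α + 1 := by rw [hβdef, hαdef]; field_simp; ring
  have hβγα : β = γ * α := by rw [hβdef, hαdef, mul_one_div]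
  have hsqrt : Real.sqrt γ < γ := by
    nlinarith [Real.sq_sqrt hγpos.le, Real.sqrt_nonneg γ]
  set m : ℝ := Finset.univ.sup' hne (fun j => -c j) with hm
  have hS : {h : ℝ | ∀ j, 0 < h + c j} = Set.Ioi m := by
    ext h
    simp only [Set.mem_setOf_eq, Set.mem_Ioi, hm, Finset.sup'_lt_iff]
    constructor
    · intro H j _; have := H j; linarith
    · intro H j; have := H j (Finset.mem_univ j); linarith
  -- domain membership gives positivity
  have hdom : ∀ h ∈ Set.Ioi m, ∀ j, 0 < h + c j := by
    intro h hh j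
    rw [← hS] at hh; exact hh j
  set g : ℝ → ℝ := fun h => ρbar / (γ - 1) *
        (∑ j, w j * ((γ - 1) * (h + c j) / γ) ^ β) /
        (∑ j, w j * ((γ - 1) * (h + c j) / γ) ^ α) with hgdef
  -- derivative facts
  have hbase : ∀ h ∈ Set.Ioi m, ∀ j, 0 < (γ - 1) * (h + c j) / γ := by
    intro h hh j
    have := hdom h hh j
    positivity
  have hB : ∀ h ∈ Set.Ioi m, 0 < ∑ j, w j * ((γ - 1) * (h + c j) / γ) ^ α := by
    intro h hh
    refine Finset.sum_pos (fun j _ => ?_) hne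
    exact mul_pos (hw j) (Real.rpow_pos_of_pos (hbase h hh j) α)
  have hinner : ∀ (j : Fin N) (h : ℝ),
      HasDerivAt (fun x : ℝ => (γ - 1) * (x + c j) / γ) ((γ - 1) / γ) h := by
    intro j h
    have := (((hasDerivAt_id h).add_const (c j)).const_mul (γ - 1)).div_const γ
    simpa using this
  have hderiv : ∀ p : ℝ, ∀ h ∈ Set.Ioi m,
      HasDerivAt (fun x : ℝ => ∑ j, w j * ((γ - 1) * (x + c j) / γ) ^ p)
        ((γ - 1) / γ * p * ∑ j, w j * ((γ - 1) * (h + c j) / γ) ^ (p - 1)) h := by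
    intro p h hh
    have H : HasDerivAt (fun x : ℝ => ∑ j, w j * ((γ - 1) * (x + c j) / γ) ^ p)
        (∑ j, w j * ((γ - 1) / γ * p * ((γ - 1) * (h + c j) / γ) ^ (p - 1))) h := by
      refine HasDerivAt.fun_sum (fun j _ => ?_)
      exact ((hinner j h).rpow_const (Or.inl (ne_of_gt (hbase h hh j)))).const_mul (w j)
    convert H using 1
    rw [Finset.mul_sum]
    exact Finset.sum_congr rfl fun j _ => by ring
  -- g is strictly monotone on Ioi m
  have hgmono : StrictMonoOn g (Set.Ioi m) := by
    have hgd : ∀ h ∈ Set.Ioi m, HasDerivAt g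
        ((ρbar / (γ - 1) * ((γ - 1) / γ * β * ∑ j, w j * ((γ - 1) * (h + c j) / γ) ^ (β - 1)) *
            (∑ j, w j * ((γ - 1) * (h + c j) / γ) ^ α) -
          ρbar / (γ - 1) * (∑ j, w j * ((γ - 1) * (h + c j) / γ) ^ β) *
            ((γ - 1) / γ * α * ∑ j, w j * ((γ - 1) * (h + c j) / γ) ^ (α - 1))) /
          (∑ j, w j * ((γ - 1) * (h + c j) / γ) ^ α) ^ 2) h := by
      intro h hh
      exact ((hderiv β h hh).const_mul (ρbar / (γ - 1))).div (hderiv α h hh)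
        (ne_of_gt (hB h hh))
    refine strictMonoOn_of_deriv_pos (convex_Ioi m) ?_ ?_
    · intro h hh
      exact (hgd h hh).differentiableAt.continuousAt.continuousWithinAt
    · intro h hh
      rw [interior_Ioi] at hh
      rw [(hgd h hh).deriv]
      have hBpos : 0 < ∑ j, w j * ((γ - 1) * (h + c j) / γ) ^ α := hB h hh
      refine div_pos ?_ (by positivity)
      have hrat : ∀ j k : Fin N, (γ - 1) * (h + c j) / γ < γ * ((γ - 1) * (h + c k) / γ) := by
        intro j k
        have h1 : h + c j < Real.sqrt γ * (h + c k) := hratio h (hdom h hh) j k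
        have h2 : Real.sqrt γ * (h + c k) < γ * (h + c k) :=
          mul_lt_mul_of_pos_right hsqrt (hdom h hh k)
        have h3 : h + c j < γ * (h + c k) := h1.trans h2
        rw [mul_div_assoc']
        rw [div_lt_div_iff₀ hγpos hγpos]
        nlinarith [mul_lt_mul_of_pos_left h3 (mul_pos hγ0 hγpos)]
      have hkey := stmt_7_key γ hγ1 N hne w (fun j => (γ - 1) * (h + c j) / γ) hw
        (hbase h hh) hrat α hαpos
      simp only [] at hkey
      have hb1 : β - 1 = α := by rw [hβα]; ring
      have hga : γ * α = α + 1 := by rw [← hβγα, hβα]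
      rw [hga] at hkey
      rw [hb1, hβα]
      have hρ : (0:ℝ) < ρbar / (γ - 1) := by positivity
      have hκ : (0:ℝ) < (γ - 1) / γ := by positivity
      nlinarith [mul_pos (mul_pos hρ hκ) (sub_pos.mpr hkey)]
  -- transfer to f
  rw [hS]
  intro x hx y hy hxy
  have hfx : f x = g x := hf x (hdom x hx)
  have hfy : f y = g y := hf y (hdom y hy)
  rw [hfx, hfy]
  exact hgmono hx hy hxy
end

section
/- Suppose the hydrostatic equilibrium condition holds exactly in the discrete sense: for each cell i, the reconstructed interface states satisfy U_{i+1/2-} = U_{i+1/2+} = (ρ_eq(x_{i+1/2}), 0, ρe_eq(x_{i+1/2})), and the numerical flux 𝓕 is consistent (𝓕(u,u) = f(u)). Then for the Euler flux f(ρ, ρv, E) = (ρv, ρv² + p, (E+p)v) the interface flux equals F_{i+1/2} = (0, p_eq(x_{i+1/2}), 0), and with source term S̄ᵢ = (0, (p_eq(x_{i+1/2}) - p_eq(x_{i-1/2}))/Δx, 0), the semi-discrete residual -(F_{i+1/2} - F_{i-1/2})/Δx + S̄ᵢ vanishes identically. -/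
/-- Well-balanced property of the semi-discrete scheme: at discrete
hydrostatic equilibrium, consistent interface fluxes reduce to pure pressure
fluxes and the residual `-(F_{i+1/2} - F_{i-1/2})/Δx + S̄ᵢ` vanishes. -/
theorem stmt_10 (P : ℝ × ℝ × ℝ → ℝ)
    (euler : ℝ × ℝ × ℝ → ℝ × ℝ × ℝ)
    (heuler : ∀ u : ℝ × ℝ × ℝ,
      euler u = (u.2.1, u.2.1 ^ 2 / u.1 + P u, (u.2.2 + P u) * u.2.1 / u.1))
    (F : ℝ × ℝ × ℝ → ℝ × ℝ × ℝ → ℝ × ℝ × ℝ)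
    (hconsistent : ∀ u, F u u = euler u)
    (Δx : ℝ) (hΔx : 0 < Δx)
    (xL xR : ℝ)
    (ρeq ρeeq peq : ℝ → ℝ) (hρpos : ∀ x, 0 < ρeq x)
    (hP : ∀ x, P (ρeq x, 0, ρeeq x) = peq x)
    -- interface states: reconstruction from the left and right coincide with
    -- the equilibrium point values
    (UL UR : ℝ × ℝ × ℝ)
    (hUL : UL = (ρeq xL, 0, ρeeq xL))
    (hUR : UR = (ρeq xR, 0, ρeeq xR)) :
    F UR UR = (0, peq xR, 0) ∧
    (-(Δx⁻¹)) • (F UR UR - F UL UL) +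
        ((0 : ℝ), (peq xR - peq xL) / Δx, (0 : ℝ)) = 0 := by
  have key : ∀ x, F (ρeq x, 0, ρeeq x) (ρeq x, 0, ρeeq x) = (0, peq x, 0) := by
    intro x
    rw [hconsistent, heuler, hP]
    simp
  have hR : F UR UR = (0, peq xR, 0) := by rw [hUR]; exact key xR
  have hL : F UL UL = (0, peq xL, 0) := by rw [hUL]; exact key xL
  refine ⟨hR, ?_⟩
  rw [hR, hL]
  have hΔ : Δx ≠ 0 := ne_of_gt hΔx
  simp [Prod.ext_iff, Prod.smul_def, smul_eq_mul, sub_eq_iff_eq_add, div_eq_iff hΔ]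
  ring
end

section
/- Uniqueness of the recovered equilibrium: let 1 < γ ≤ 2 and suppose constants c_j (j = 1..N) and positive weights w_j are such that for every admissible h (with h + c_j > 0 for all j), max_j(h+c_j)/min_j(h+c_j) < √γ. Then for any targets ρ̄ > 0 and (ρe)̄ > 0, there is at most one pair (h₀, K₀) with K₀ > 0 satisfying simultaneously ρ̄ = (1/Δx) Σ w_j (((γ-1)/(γK₀))(h₀+c_j))^(1/(γ-1)) and (ρe)̄ = (1/(γ-1)Δx) Σ w_j K₀^(-1/(γ-1)) (((γ-1)/γ)(h₀+c_j))^(γ/(γ-1)). -/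
open Finset

private lemma aux_hasDerivAt {N : ℕ} (w c : Fin N → ℝ) (p x : ℝ)
    (hx : ∀ j, 0 < x + c j) :
    HasDerivAt (fun y => ∑ j, w j * (y + c j) ^ p)
      (∑ j, w j * (p * (x + c j) ^ (p - 1))) x := by
  apply HasDerivAt.fun_sum
  intro j _
  have h1 : HasDerivAt (fun y : ℝ => y + c j) 1 x := (hasDerivAt_id x).add_const _
  have h2 := (h1.rpow_const (p := p) (Or.inl (hx j).ne')).const_mul (w j)
  convert h2 using 1
  · rfl
  ring

private lemma aux_S_pos {N : ℕ} (hN : 1 ≤ N) (w c : Fin N → ℝ) (hw : ∀ j, 0 < w j)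
    (p x : ℝ) (hx : ∀ j, 0 < x + c j) :
    0 < ∑ j, w j * (x + c j) ^ p := by
  have : Nonempty (Fin N) := Fin.pos_iff_nonempty.mp hN
  exact Finset.sum_pos
    (fun j _ => mul_pos (hw j) (Real.rpow_pos_of_pos (hx j) p)) univ_nonempty

private lemma aux_key (γ : ℝ) {N : ℕ} (w c : Fin N → ℝ)
    (hw : ∀ j, 0 < w j) (x : ℝ) (hx : ∀ j, 0 < x + c j)
    (hr : ∀ j k, x + c j < Real.sqrt γ * (x + c k)) (α : ℝ) :
    (∑ j, w j * (x + c j) ^ (α + 1)) * (∑ j, w j * (x + c j) ^ (α - 1))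
      ≤ Real.sqrt γ * ((∑ j, w j * (x + c j) ^ α) * (∑ j, w j * (x + c j) ^ α)) := by
  rw [Finset.sum_mul_sum, Finset.sum_mul_sum, Finset.mul_sum]
  apply Finset.sum_le_sum
  intro j _
  rw [Finset.mul_sum]
  apply Finset.sum_le_sum
  intro k _
  have hj := hx j
  have hk := hx k
  have e1 : (x + c j) ^ (α + 1) = (x + c j) ^ α * (x + c j) := by
    rw [Real.rpow_add hj, Real.rpow_one]
  have e2 : (x + c k) ^ (α - 1) = (x + c k) ^ α / (x + c k) := by
    rw [show α - 1 = α + (-1) by ring, Real.rpow_add hk, Real.rpow_neg_one]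
    ring
  rw [e1, e2]
  have hb : (x + c j) / (x + c k) ≤ Real.sqrt γ :=
    le_of_lt ((div_lt_iff₀ hk).mpr (by linarith [hr j k]))
  have key : w j * ((x + c j) ^ α * (x + c j)) * (w k * ((x + c k) ^ α / (x + c k)))
      = (w j * (x + c j) ^ α * (w k * (x + c k) ^ α)) * ((x + c j) / (x + c k)) := by
    field_simp
  have hA : (0:ℝ) ≤ w j * (x + c j) ^ α * (w k * (x + c k) ^ α) := by
    have := (hw j).le
    have := (hw k).le
    have := (Real.rpow_pos_of_pos hj α).le
    have := (Real.rpow_pos_of_pos hk α).le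
    positivity
  rw [key, mul_comm (Real.sqrt γ)]
  exact mul_le_mul_of_nonneg_left hb hA

private lemma aux_mono (γ : ℝ) (hγ1 : 1 < γ) (hγ2 : γ ≤ 2) {N : ℕ} (hN : 1 ≤ N)
    (w c : Fin N → ℝ) (hw : ∀ j, 0 < w j)
    (hratio : ∀ h, (∀ j, 0 < h + c j) → ∀ j k, h + c j < Real.sqrt γ * (h + c k))
    (h₁ h₂ : ℝ) (hp1 : ∀ j, 0 < h₁ + c j) (hlt : h₁ < h₂) :
    (∑ j, w j * (h₁ + c j) ^ (γ / (γ - 1))) * (∑ j, w j * (h₂ + c j) ^ (1 / (γ - 1)))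
      < (∑ j, w j * (h₂ + c j) ^ (γ / (γ - 1))) * (∑ j, w j * (h₁ + c j) ^ (1 / (γ - 1))) := by
  have hγ0 : (0:ℝ) < γ - 1 := by linarith
  set α : ℝ := 1 / (γ - 1) with hα
  set β : ℝ := γ / (γ - 1) with hβdef
  have hαpos : 0 < α := by positivity
  have hβα : β = α + 1 := by rw [hβdef, hα]; field_simp; ring
  have hβ1 : β - 1 = α := by rw [hβα]; ring
  have hγα : β = γ * α := by rw [hα, hβdef]; ring
  have hadm : ∀ x : ℝ, h₁ ≤ x → ∀ j, 0 < x + c j := by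
    intro x hx j
    have := hp1 j
    linarith
  -- positivity of G on [h₁, h₂]
  have hGpos : ∀ x : ℝ, h₁ ≤ x → 0 < ∑ j, w j * (x + c j) ^ α :=
    fun x hx => aux_S_pos hN w c hw α x (hadm x hx)
  have hsqrt_pos : 0 < Real.sqrt γ := Real.sqrt_pos.mpr (by linarith)
  have hsqrt_lt : Real.sqrt γ < γ := by
    nlinarith [Real.sq_sqrt (by linarith : (0:ℝ) ≤ γ), Real.sqrt_nonneg γ]
  -- strict monotonicity of the ratio on Icc h₁ h₂
  have hmono : StrictMonoOn
      (fun x => (∑ j, w j * (x + c j) ^ β) / (∑ j, w j * (x + c j) ^ α))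
      (Set.Icc h₁ h₂) := by
    apply strictMonoOn_of_deriv_pos (convex_Icc h₁ h₂)
    · apply ContinuousOn.div
      · intro x hx
        exact ((aux_hasDerivAt w c β x (hadm x hx.1)).continuousAt).continuousWithinAt
      · intro x hx
        exact ((aux_hasDerivAt w c α x (hadm x hx.1)).continuousAt).continuousWithinAt
      · intro x hx
        exact (hGpos x hx.1).ne'
    · intro x hx
      rw [interior_Icc] at hx
      have hxadm : ∀ j, 0 < x + c j := hadm x hx.1.le
      have hF := aux_hasDerivAt w c β x hxadm
      have hG := aux_hasDerivAt w c α x hxadm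
      have hGx : 0 < ∑ j, w j * (x + c j) ^ α := hGpos x hx.1.le
      have hd := hF.div hG hGx.ne'
      rw [(show HasDerivAt (fun x => (∑ j, w j * (x + c j) ^ β) / ∑ j, w j * (x + c j) ^ α) _ x from hd).deriv]
      -- rewrite the derivative sums
      have eF : (∑ j, w j * (β * (x + c j) ^ (β - 1)))
          = β * ∑ j, w j * (x + c j) ^ α := by
        rw [Finset.mul_sum]
        apply Finset.sum_congr rfl
        intro j _
        rw [hβ1]
        ring
      have eG : (∑ j, w j * (α * (x + c j) ^ (α - 1)))
          = α * ∑ j, w j * (x + c j) ^ (α - 1) := by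
        rw [Finset.mul_sum]
        apply Finset.sum_congr rfl
        intro j _
        ring
      rw [eF, eG]
      apply div_pos
      · -- numerator positive
        have hkey : (∑ j, w j * (x + c j) ^ β) * (∑ j, w j * (x + c j) ^ (α - 1))
            ≤ Real.sqrt γ * ((∑ j, w j * (x + c j) ^ α) * (∑ j, w j * (x + c j) ^ α)) := by
          rw [hβα]
          exact aux_key γ w c hw x hxadm (hratio x hxadm) α
        have hFpos : 0 < ∑ j, w j * (x + c j) ^ β :=
          aux_S_pos hN w c hw β x hxadm
        have hS1pos : 0 < ∑ j, w j * (x + c j) ^ (α - 1) :=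
          aux_S_pos hN w c hw (α - 1) x hxadm
        have h1 : α * ((∑ j, w j * (x + c j) ^ β) * (∑ j, w j * (x + c j) ^ (α - 1)))
            ≤ α * (Real.sqrt γ * ((∑ j, w j * (x + c j) ^ α) * (∑ j, w j * (x + c j) ^ α))) :=
          mul_le_mul_of_nonneg_left hkey hαpos.le
        have h2 : 0 < ((γ - Real.sqrt γ) * α) *
            ((∑ j, w j * (x + c j) ^ α) * (∑ j, w j * (x + c j) ^ α)) :=
          mul_pos (mul_pos (sub_pos.mpr hsqrt_lt) hαpos) (mul_pos hGx hGx)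
        have h3 : β * ((∑ j, w j * (x + c j) ^ α) * (∑ j, w j * (x + c j) ^ α))
            = γ * α * ((∑ j, w j * (x + c j) ^ α) * (∑ j, w j * (x + c j) ^ α)) := by
          rw [hγα]
        nlinarith [h1, h2, h3]
      · positivity
  have := hmono (Set.left_mem_Icc.mpr hlt.le) (Set.right_mem_Icc.mpr hlt.le) hlt
  have hG1 : 0 < ∑ j, w j * (h₁ + c j) ^ α := hGpos h₁ le_rfl
  have hG2 : 0 < ∑ j, w j * (h₂ + c j) ^ α := hGpos h₂ hlt.le
  rw [div_lt_div_iff₀ hG1 hG2] at this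
  linarith

/-- Uniqueness of the recovered equilibrium `(h₀, K₀)` for the polytropic
ideal gas, under the variation bound `max_j(h+c_j)/min_j(h+c_j) < √γ` on
the whole admissible range, `1 < γ ≤ 2`. -/
theorem stmt_19 (γ : ℝ) (hγ1 : 1 < γ) (hγ2 : γ ≤ 2)
    (N : ℕ) (hN : 1 ≤ N) (w c : Fin N → ℝ)
    (hw : ∀ j, 0 < w j)
    (Δx : ℝ) (hΔx : 0 < Δx) (hsum : ∑ j, w j = Δx)
    (ρbar ρebar : ℝ) (hρbar : 0 < ρbar) (hρebar : 0 < ρebar)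
    (hratio : ∀ h, (∀ j, 0 < h + c j) →
      ∀ j k, h + c j < Real.sqrt γ * (h + c k)) :
    ∀ h₁ K₁ h₂ K₂ : ℝ, 0 < K₁ → 0 < K₂ →
      (∀ j, 0 < h₁ + c j) → (∀ j, 0 < h₂ + c j) →
      ρbar = (1 / Δx) *
        ∑ j, w j * ((γ - 1) / (γ * K₁) * (h₁ + c j)) ^ (1 / (γ - 1)) →
      ρebar = (1 / ((γ - 1) * Δx)) *
        ∑ j, w j * K₁ ^ (-(1 / (γ - 1))) *
          ((γ - 1) / γ * (h₁ + c j)) ^ (γ / (γ - 1)) →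
      ρbar = (1 / Δx) *
        ∑ j, w j * ((γ - 1) / (γ * K₂) * (h₂ + c j)) ^ (1 / (γ - 1)) →
      ρebar = (1 / ((γ - 1) * Δx)) *
        ∑ j, w j * K₂ ^ (-(1 / (γ - 1))) *
          ((γ - 1) / γ * (h₂ + c j)) ^ (γ / (γ - 1)) →
      h₁ = h₂ ∧ K₁ = K₂ := by
  intro h₁ K₁ h₂ K₂ hK₁ hK₂ hp1 hp2 e1 e2 e3 e4
  have hγ0 : (0:ℝ) < γ - 1 := by linarith
  have hγpos : (0:ℝ) < γ := by linarith
  set α : ℝ := 1 / (γ - 1) with hα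
  set β : ℝ := γ / (γ - 1) with hβdef
  have hαpos : 0 < α := by positivity
  have hβα : β = α + 1 := by rw [hβdef, hα]; field_simp; ring
  set D : ℝ := (γ - 1) / γ with hD
  have hDpos : 0 < D := by positivity
  set C : ℝ := D ^ α with hC
  have hCpos : 0 < C := Real.rpow_pos_of_pos hDpos α
  -- split lemma for the density sums
  have split : ∀ (K h : ℝ), 0 < K → (∀ j, 0 < h + c j) →
      (∑ j, w j * ((γ - 1) / (γ * K) * (h + c j)) ^ α)
        = C * K ^ (-α) * ∑ j, w j * (h + c j) ^ α := by
    intro K h hK hp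
    have hb : (γ - 1) / (γ * K) = D * K⁻¹ := by
      rw [hD]; field_simp
    rw [mul_comm (C * K ^ (-α)), Finset.sum_mul]
    apply Finset.sum_congr rfl
    intro j _
    rw [hb, Real.mul_rpow (by positivity) (hp j).le,
      Real.mul_rpow hDpos.le (by positivity), Real.inv_rpow hK.le,
      ← Real.rpow_neg hK.le, ← hC]
    ring
  -- split lemma for the energy sums
  have split2 : ∀ (K h : ℝ), 0 < K → (∀ j, 0 < h + c j) →
      (∑ j, w j * K ^ (-α) * (D * (h + c j)) ^ β)
        = C * D * K ^ (-α) * ∑ j, w j * (h + c j) ^ β := by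
    intro K h hK hp
    rw [mul_comm (C * D * K ^ (-α)), Finset.sum_mul]
    apply Finset.sum_congr rfl
    intro j _
    rw [Real.mul_rpow hDpos.le (hp j).le, hβα, Real.rpow_add hDpos,
      Real.rpow_one, ← hC]
    ring
  -- abbreviations for the four sums
  have hSα1 : 0 < ∑ j, w j * (h₁ + c j) ^ α := aux_S_pos hN w c hw α h₁ hp1
  have hSα2 : 0 < ∑ j, w j * (h₂ + c j) ^ α := aux_S_pos hN w c hw α h₂ hp2
  have hSβ1 : 0 < ∑ j, w j * (h₁ + c j) ^ β := aux_S_pos hN w c hw β h₁ hp1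
  have hSβ2 : 0 < ∑ j, w j * (h₂ + c j) ^ β := aux_S_pos hN w c hw β h₂ hp2
  -- the density equations in factored form
  have E1 : ρbar * Δx = C * K₁ ^ (-α) * ∑ j, w j * (h₁ + c j) ^ α := by
    rw [e1, split K₁ h₁ hK₁ hp1]
    field_simp
  have E3 : ρbar * Δx = C * K₂ ^ (-α) * ∑ j, w j * (h₂ + c j) ^ α := by
    rw [e3, split K₂ h₂ hK₂ hp2]
    field_simp
  -- the energy equations in factored form
  have E2 : ρebar * ((γ - 1) * Δx) = C * D * K₁ ^ (-α) * ∑ j, w j * (h₁ + c j) ^ β := by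
    rw [e2, split2 K₁ h₁ hK₁ hp1]
    field_simp
  have E4 : ρebar * ((γ - 1) * Δx) = C * D * K₂ ^ (-α) * ∑ j, w j * (h₂ + c j) ^ β := by
    rw [e4, split2 K₂ h₂ hK₂ hp2]
    field_simp
  -- eliminate K: the ratio equation
  have heq1 : (ρebar * ((γ - 1) * Δx)) * (∑ j, w j * (h₁ + c j) ^ α)
      = D * (ρbar * Δx) * (∑ j, w j * (h₁ + c j) ^ β) := by
    rw [E1, E2]; ring
  have heq2 : (ρebar * ((γ - 1) * Δx)) * (∑ j, w j * (h₂ + c j) ^ α)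
      = D * (ρbar * Δx) * (∑ j, w j * (h₂ + c j) ^ β) := by
    rw [E3, E4]; ring
  have hRpos : 0 < ρbar * Δx := mul_pos hρbar hΔx
  have cross : (∑ j, w j * (h₁ + c j) ^ β) * (∑ j, w j * (h₂ + c j) ^ α)
      = (∑ j, w j * (h₂ + c j) ^ β) * (∑ j, w j * (h₁ + c j) ^ α) := by
    have h1 : D * (ρbar * Δx) * ((∑ j, w j * (h₁ + c j) ^ β) * (∑ j, w j * (h₂ + c j) ^ α))
        = D * (ρbar * Δx) * ((∑ j, w j * (h₂ + c j) ^ β) * (∑ j, w j * (h₁ + c j) ^ α)) := by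
      calc D * (ρbar * Δx) * ((∑ j, w j * (h₁ + c j) ^ β) * (∑ j, w j * (h₂ + c j) ^ α))
          = (D * (ρbar * Δx) * (∑ j, w j * (h₁ + c j) ^ β)) * (∑ j, w j * (h₂ + c j) ^ α) := by ring
        _ = ((ρebar * ((γ - 1) * Δx)) * (∑ j, w j * (h₁ + c j) ^ α)) * (∑ j, w j * (h₂ + c j) ^ α) := by rw [heq1]
        _ = ((ρebar * ((γ - 1) * Δx)) * (∑ j, w j * (h₂ + c j) ^ α)) * (∑ j, w j * (h₁ + c j) ^ α) := by ring
        _ = (D * (ρbar * Δx) * (∑ j, w j * (h₂ + c j) ^ β)) * (∑ j, w j * (h₁ + c j) ^ α) := by rw [heq2]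
        _ = D * (ρbar * Δx) * ((∑ j, w j * (h₂ + c j) ^ β) * (∑ j, w j * (h₁ + c j) ^ α)) := by ring
    exact mul_left_cancel₀ (by positivity) h1
  -- uniqueness of h
  have hh : h₁ = h₂ := by
    by_contra hne
    rcases lt_or_gt_of_ne hne with hlt | hlt
    · have := aux_mono γ hγ1 hγ2 hN w c hw hratio h₁ h₂ hp1 hlt
      rw [← hβdef, ← hα] at this
      rw [cross] at this
      exact lt_irrefl _ this
    · have := aux_mono γ hγ1 hγ2 hN w c hw hratio h₂ h₁ hp2 hlt
      rw [← hβdef, ← hα] at this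
      rw [← cross] at this
      exact lt_irrefl _ this
  refine ⟨hh, ?_⟩
  -- uniqueness of K
  subst hh
  have hKK : K₁ ^ (-α) = K₂ ^ (-α) := by
    have h1 : C * K₁ ^ (-α) * (∑ j, w j * (h₁ + c j) ^ α)
        = C * K₂ ^ (-α) * (∑ j, w j * (h₁ + c j) ^ α) := by rw [← E1, ← E3]
    have h2 := mul_right_cancel₀ hSα1.ne' h1
    rw [mul_comm C, mul_comm C] at h2
    exact mul_right_cancel₀ hCpos.ne' h2
  have hαne : (-α) ≠ 0 := by
    intro h
    exact hαpos.ne' (by linarith [neg_eq_zero.mp h])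
  have := congrArg (fun t : ℝ => t ^ (-α)⁻¹) hKK
  simpa [← Real.rpow_mul hK₁.le, ← Real.rpow_mul hK₂.le,
    mul_inv_cancel₀ hαne, mul_inv_cancel₀ hαpos.ne'] using this
end
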